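/- Let c = (27/4)^{1/3}, let C > 0 and X > 0 be real numbers, and let B be a nonzero real number. Suppose ε is a real number with |ε| ≥ C and A = −c·(B²)^{1/3} + ε·X·(B²)^{−2/3}. Then 16·|4A³ + 27B²| ≥ 64·CX; in particular 16·|4A³ + 27B²| > CX. -/

import Mathlib

set_option maxHeartbeats 1000000 in
/-- If `B ≠ 0`, `|ε| ≥ C` and `A = -c B^{2/3} + εX B^{-4/3}` where `c = (27/4)^{1/3}`,
then `|Δ_{A,B}| = 16|4A³+27B²| ≥ 64CX > CX`. -/
theorem disc_large_far_from_cusp (C X B ε : ℝ) (hC : 0 < C) (hX : 0 < X)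
    (hB : B ≠ 0) (hε : C ≤ |ε|)
    (A : ℝ)
    (hA : A = -((27 / 4 : ℝ) ^ ((1 : ℝ) / 3)) * (B ^ 2) ^ ((1 : ℝ) / 3)
      + ε * X * (B ^ 2) ^ (-(2 : ℝ) / 3)) :
    64 * C * X ≤ 16 * |4 * A ^ 3 + 27 * B ^ 2| ∧
      C * X < 16 * |4 * A ^ 3 + 27 * B ^ 2| := by
  set c : ℝ := (27 / 4 : ℝ) ^ ((1 : ℝ) / 3) with hc
  set b : ℝ := (B ^ 2) ^ ((1 : ℝ) / 3) with hbdef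
  have hB2 : (0:ℝ) < B ^ 2 := by positivity
  have hbpos : 0 < b := Real.rpow_pos_of_pos hB2 _
  have hcpos : 0 < c := Real.rpow_pos_of_pos (by norm_num) _
  have hb3 : b ^ 3 = B ^ 2 := by
    rw [hbdef, ← Real.rpow_natCast ((B^2) ^ ((1:ℝ)/3)) 3, ← Real.rpow_mul hB2.le]
    norm_num
  have hc3 : c ^ 3 = 27 / 4 := by
    rw [hc, ← Real.rpow_natCast ((27/4:ℝ) ^ ((1:ℝ)/3)) 3, ← Real.rpow_mul (by norm_num)]
    norm_num
  have hneg : (B ^ 2) ^ (-(2 : ℝ) / 3) = 1 / b ^ 2 := by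
    rw [show (-(2:ℝ)/3) = -(1/3 * 2) by norm_num, Real.rpow_neg hB2.le,
      Real.rpow_mul hB2.le, ← hbdef, show ((2:ℝ)) = ((2:ℕ):ℝ) from by norm_num,
      Real.rpow_natCast, one_div]
  have hbne : b ≠ 0 := ne_of_gt hbpos
  have key : 4 * A ^ 3 + 27 * B ^ 2
      = 4 * (ε * X) * (3 * c ^ 2 - 3 * c * (ε * X) / b ^ 3 + (ε * X) ^ 2 / b ^ 6) := by
    rw [hA, hneg, ← hb3]
    field_simp
    ring_nf
    linear_combination (-4 * b ^ 9) * hc3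
  have h4 : (4:ℝ) ≤ 3 * c ^ 2 := by
    nlinarith [hc3, hcpos, sq_nonneg (c - 2), sq_nonneg (c - 3/2), mul_pos hcpos hcpos]
  have hdd : (ε * X) ^ 2 / b ^ 6 = ((ε * X) / b ^ 3) ^ 2 := by
    rw [div_pow]; ring_nf
  have hq : (1:ℝ) ≤ 3 * c ^ 2 - 3 * c * (ε * X) / b ^ 3 + (ε * X) ^ 2 / b ^ 6 := by
    rw [hdd, mul_div_assoc]
    nlinarith [sq_nonneg ((ε * X) / b ^ 3 - 3 * c / 2), h4]
  have habs : |4 * A ^ 3 + 27 * B ^ 2|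
      = 4 * (|ε| * X) * (3 * c ^ 2 - 3 * c * (ε * X) / b ^ 3 + (ε * X) ^ 2 / b ^ 6) := by
    rw [key, abs_mul, abs_mul, abs_mul, abs_of_pos hX,
      abs_of_pos (lt_of_lt_of_le one_pos hq)]
    norm_num
  have h1 : 64 * C * X ≤ 16 * |4 * A ^ 3 + 27 * B ^ 2| := by
    rw [habs]
    have hCε : 0 < |ε| := lt_of_lt_of_le hC hε
    nlinarith [hq, hε, hC, hX, mul_pos hCε hX]
  refine ⟨h1, lt_of_lt_of_le ?_ h1⟩
  nlinarith [mul_pos hC hX]
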